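/- arXiv:1910.10673 — 2 statements merged into one kernel-verified Lean document; each statement's English description precedes it below -/
import Mathlib

section
/- Let X be a nonempty set, f, g : X → ℝ, A ⊆ ℝ, and define the parametric optimal value J*(a) = inf { f(x) : x ∈ X, a − g(x) ∈ A }. Then for every ξ ∈ ℝ, the Fenchel conjugate satisfies J*^c(ξ) = δ_A^c(ξ) − inf_{x ∈ X} { f(x) − ξ·g(x) }. -/
-- Indicator function of a set `A ⊆ ℝ`: `0` on `A`, `+∞` outside.
open Classical in
noncomputable def indicatorFn (A : Set ℝ) (a : ℝ) : EReal :=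
  if a ∈ A then 0 else ⊤

-- Fenchel conjugate of an extended-real-valued function on `ℝ`.
noncomputable def fenchelConj (h : ℝ → EReal) (ξ : ℝ) : EReal :=
  ⨆ a : ℝ, ((ξ * a : ℝ) : EReal) - h a

lemma ereal_iSup_add_coe {ι : Sort*} (h : ι → EReal) (c : ℝ) :
    (⨆ i, (h i + (c : EReal))) = (⨆ i, h i) + (c : EReal) := by
  refine le_antisymm (iSup_le fun i => add_le_add_left (le_iSup h i) _) ?_
  rw [← EReal.le_sub_iff_add_le (Or.inl (EReal.coe_ne_bot c)) (Or.inl (EReal.coe_ne_top c))]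
  exact iSup_le fun i =>
    (EReal.le_sub_iff_add_le (Or.inl (EReal.coe_ne_bot c))
      (Or.inl (EReal.coe_ne_top c))).2 (le_iSup (fun i => h i + (c : EReal)) i)

lemma ereal_neg_iInf {ι : Sort*} (h : ι → EReal) : -(⨅ i, h i) = ⨆ i, -(h i) := by
  refine le_antisymm ?_ (iSup_le fun i => by
    rw [EReal.neg_le_neg_iff]; exact iInf_le _ i)
  rw [← neg_neg (⨆ i, -(h i)), EReal.neg_le_neg_iff]
  exact le_iInf fun i => by
    rw [← neg_neg (h i), EReal.neg_le_neg_iff]; exact le_iSup (fun i => -(h i)) i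

lemma ereal_coe_sub_iInf {ι : Sort*} (r : ℝ) (h : ι → EReal) :
    (r : EReal) - ⨅ i, h i = ⨆ i, ((r : EReal) - h i) := by
  have h1 : ∀ i, (r : EReal) - h i = -(h i) + (r : EReal) := fun i => by
    rw [sub_eq_add_neg, add_comm]
  simp_rw [h1]
  rw [ereal_iSup_add_coe, ← ereal_neg_iInf, add_comm, ← sub_eq_add_neg]

lemma ereal_iSup_const_add_coe {ι : Sort*} [Nonempty ι] (C : EReal) (c : ι → ℝ) :
    (⨆ i, (C + (c i : EReal))) = C + ⨆ i, (c i : EReal) := by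
  induction C using EReal.rec with
  | bot => simp [EReal.bot_add]
  | coe r =>
    simp_rw [add_comm ((r : ℝ) : EReal)]
    rw [ereal_iSup_add_coe, add_comm]
  | top =>
    simp_rw [EReal.top_add_coe, iSup_const]
    rw [EReal.top_add_of_ne_bot]
    exact ((EReal.bot_lt_coe _).trans_le
      (le_iSup (fun i => ((c i : ℝ) : EReal)) (Classical.arbitrary ι))).ne'

/-- Conjugate of the parametric optimal value
`J*(a) = inf {f(x) : x ∈ X, a - g(x) ∈ A}`, interpreted as
`inf_x (f x + δ_A (a - g x))`. -/
theorem fenchelConj_parametric_value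
    {X : Type*} [Nonempty X] (f g : X → ℝ) (A : Set ℝ) (ξ : ℝ) :
    fenchelConj (fun a => ⨅ x : X, ((f x : EReal) + indicatorFn A (a - g x))) ξ
      = fenchelConj (indicatorFn A) ξ
        - ⨅ x : X, ((f x - ξ * g x : ℝ) : EReal) := by
  classical
  have hpt : ∀ (x : X) (a : ℝ),
      ((ξ * a : ℝ) : EReal) - ((f x : EReal) + indicatorFn A (a - g x))
        = (((ξ * (a - g x) : ℝ) : EReal) - indicatorFn A (a - g x))
            + ((ξ * g x - f x : ℝ) : EReal) := by
    intro x a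
    by_cases h : a - g x ∈ A
    · simp only [indicatorFn, if_pos h, add_zero, sub_zero]
      norm_cast
      ring
    · simp only [indicatorFn, if_neg h]
      rw [EReal.coe_add_top, EReal.sub_top, EReal.sub_top, EReal.bot_add]
  unfold fenchelConj
  calc (⨆ a : ℝ, ((ξ * a : ℝ) : EReal)
          - ⨅ x : X, ((f x : EReal) + indicatorFn A (a - g x)))
      = ⨆ a : ℝ, ⨆ x : X, (((ξ * a : ℝ) : EReal)
          - ((f x : EReal) + indicatorFn A (a - g x))) := by
        simp_rw [ereal_coe_sub_iInf]
    _ = ⨆ x : X, ⨆ a : ℝ, (((ξ * a : ℝ) : EReal)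
          - ((f x : EReal) + indicatorFn A (a - g x))) := iSup_comm
    _ = ⨆ x : X, ⨆ a : ℝ, ((((ξ * (a - g x) : ℝ) : EReal) - indicatorFn A (a - g x))
          + ((ξ * g x - f x : ℝ) : EReal)) := by
        exact iSup_congr fun x => iSup_congr fun a => hpt x a
    _ = ⨆ x : X, ((⨆ a : ℝ, (((ξ * (a - g x) : ℝ) : EReal) - indicatorFn A (a - g x)))
          + ((ξ * g x - f x : ℝ) : EReal)) := by
        exact iSup_congr fun x => ereal_iSup_add_coe _ _
    _ = ⨆ x : X, ((⨆ b : ℝ, (((ξ * b : ℝ) : EReal) - indicatorFn A b))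
          + ((ξ * g x - f x : ℝ) : EReal)) := by
        refine iSup_congr fun x => ?_
        congr 1
        exact (Equiv.subRight (g x)).iSup_comp
          (g := fun b => (((ξ * b : ℝ) : EReal) - indicatorFn A b))
    _ = (⨆ b : ℝ, (((ξ * b : ℝ) : EReal) - indicatorFn A b))
          + ⨆ x : X, ((ξ * g x - f x : ℝ) : EReal) :=
        ereal_iSup_const_add_coe _ _
    _ = (⨆ b : ℝ, (((ξ * b : ℝ) : EReal) - indicatorFn A b))
          + ⨆ x : X, -((f x - ξ * g x : ℝ) : EReal) := by
        congr 1
        refine iSup_congr fun x => ?_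
        rw [← EReal.coe_neg]
        norm_num
    _ = (⨆ b : ℝ, (((ξ * b : ℝ) : EReal) - indicatorFn A b))
          - ⨅ x : X, ((f x - ξ * g x : ℝ) : EReal) := by
        rw [← ereal_neg_iInf, ← sub_eq_add_neg]
end

section
/- Revenue adequacy identity: Suppose real vectors Λᵖ, Λ^q ∈ ℝⁿ, nonnegative multipliers μ ∈ ℝ₊^m, μ̄ᵛ, μ̲ᵛ ∈ ℝ₊ⁿ, a vector V ∈ ℂⁿ, and Hermitian matrices Φ_k, Ψ_k, Φ_{kℓ} satisfy the stationarity condition [Σ_k Λᵖ_k Φ_k + Σ_k Λ^q_k Ψ_k + Σ_{kℓ} μ_{kℓ} Φ_{kℓ} + Σ_k (μ̄ᵛ_k − μ̲ᵛ_k) e_k e_kᵀ] V = 0, and complementary slackness μ_{kℓ}(V^H Φ_{kℓ} V − f_{kℓ}) = 0, μ̄ᵛ_k(V^H e_k e_k^H V − v̄_k²) = 0, μ̲ᵛ_k(V^H e_k e_k^H V − v̲_k²) = 0 for all k, kℓ. If p^D_k − p^G_k = −V^H Φ_k V and q^D_k − q^G_k = −V^H Ψ_k V for all k, then the merchandising surplus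 MS := Σ_k Λᵖ_k(p^D_k − p^G_k) + Σ_k Λ^q_k(q^D_k − q^G_k) equals Σ_{kℓ} μ_{kℓ} f_{kℓ} + Σ_k μ̄ᵛ_k v̄_k² − Σ_k μ̲ᵛ_k v̲_k². -/
open Matrix
open scoped BigOperators

lemma my_sum_mulVec {ι n : Type*} [Fintype n] (s : Finset ι)
    (A : ι → Matrix n n ℂ) (v : n → ℂ) :
    (∑ i ∈ s, A i).mulVec v = ∑ i ∈ s, (A i).mulVec v := by
  ext j
  simp only [Matrix.mulVec, dotProduct, Finset.sum_apply, Matrix.sum_apply,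
    Finset.sum_mul]
  exact Finset.sum_comm

lemma my_dotProduct_sum {ι n : Type*} [Fintype n] (s : Finset ι)
    (u : n → ℂ) (w : ι → n → ℂ) :
    u ⬝ᵥ (∑ i ∈ s, w i) = ∑ i ∈ s, u ⬝ᵥ w i := by
  simp only [dotProduct, Finset.sum_apply, Finset.mul_sum]
  exact Finset.sum_comm

/-- Revenue adequacy identity: under stationarity, complementary slackness and
nodal power balance at a KKT point of the AC economic dispatch problem, the
merchandising surplus `MS = Σ Λᵖ(pᴰ - pᴳ) + Σ Λᑫ(qᴰ - qᴳ)` equals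
`Σ μ f + Σ μ̄ᵛ v̄² - Σ μ̲ᵛ v̲²`. -/
theorem merchandising_surplus_identity {n m : ℕ}
    (Φ Ψ : Fin n → Matrix (Fin n) (Fin n) ℂ)
    (Φl : Fin m → Matrix (Fin n) (Fin n) ℂ)
    (hΦ : ∀ k, (Φ k).IsHermitian) (hΨ : ∀ k, (Ψ k).IsHermitian)
    (hΦl : ∀ l, (Φl l).IsHermitian)
    (Λp Λq : Fin n → ℝ) (μ : Fin m → ℝ) (μbarv μlowv : Fin n → ℝ)
    (hμ : ∀ l, 0 ≤ μ l) (hμbar : ∀ k, 0 ≤ μbarv k) (hμlow : ∀ k, 0 ≤ μlowv k)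
    (V : Fin n → ℂ) (f : Fin m → ℝ) (vbar vlow : Fin n → ℝ)
    (pD pG qD qG : Fin n → ℝ)
    -- stationarity condition
    (hstat :
      (∑ k, (Λp k : ℂ) • Φ k + ∑ k, (Λq k : ℂ) • Ψ k
        + ∑ l, (μ l : ℂ) • Φl l
        + ∑ k, ((μbarv k - μlowv k : ℝ) : ℂ) • single k k (1 : ℂ)).mulVec V
        = 0)
    -- complementary slackness
    (hcsμ : ∀ l, (μ l : ℂ) * (star V ⬝ᵥ (Φl l).mulVec V - (f l : ℂ)) = 0)
    (hcsbar : ∀ k, μbarv k * (Complex.normSq (V k) - vbar k ^ 2) = 0)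
    (hcslow : ∀ k, μlowv k * (Complex.normSq (V k) - vlow k ^ 2) = 0)
    -- nodal power balance
    (hp : ∀ k, ((pD k - pG k : ℝ) : ℂ) = -(star V ⬝ᵥ (Φ k).mulVec V))
    (hq : ∀ k, ((qD k - qG k : ℝ) : ℂ) = -(star V ⬝ᵥ (Ψ k).mulVec V)) :
    ∑ k, Λp k * (pD k - pG k) + ∑ k, Λq k * (qD k - qG k)
      = ∑ l, μ l * f l + ∑ k, μbarv k * vbar k ^ 2
        - ∑ k, μlowv k * vlow k ^ 2 := by
  have h0 : (0 : ℂ)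
      = ∑ k, (Λp k : ℂ) * (star V ⬝ᵥ (Φ k).mulVec V)
        + ∑ k, (Λq k : ℂ) * (star V ⬝ᵥ (Ψ k).mulVec V)
        + ∑ l, (μ l : ℂ) * (star V ⬝ᵥ (Φl l).mulVec V)
        + ∑ k, (star V ⬝ᵥ (Matrix.single k k (((μbarv k - μlowv k : ℝ) : ℂ))).mulVec V) := by
    have := congrArg (fun w => star V ⬝ᵥ w) hstat
    simpa [Matrix.add_mulVec, my_sum_mulVec, Matrix.smul_mulVec,
      dotProduct_add, my_dotProduct_sum, dotProduct_smul, smul_eq_mul] using this.symm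
  have hsb : ∀ (k) (c : ℂ), star V ⬝ᵥ (Matrix.single k k c).mulVec V
      = c * (Complex.normSq (V k) : ℂ) := by
    intro k c
    simp [dotProduct, Matrix.mulVec, Matrix.single, Finset.mul_sum, mul_comm,
      Complex.normSq_eq_conj_mul_self, ite_and, Finset.sum_ite_eq, Finset.sum_ite_eq']
    ring
  have hμf : ∀ l, (μ l : ℂ) * (star V ⬝ᵥ (Φl l).mulVec V) = (μ l * f l : ℝ) := by
    intro l
    have := hcsμ l
    push_cast
    linear_combination this
  have hΦv : ∀ k, (star V ⬝ᵥ (Φ k).mulVec V) = -((pD k - pG k : ℝ) : ℂ) := by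
    intro k; rw [hp k]; ring
  have hΨv : ∀ k, (star V ⬝ᵥ (Ψ k).mulVec V) = -((qD k - qG k : ℝ) : ℂ) := by
    intro k; rw [hq k]; ring
  have hbar : ∀ k, ((μbarv k - μlowv k : ℝ) : ℂ) * (Complex.normSq (V k) : ℂ)
      = ((μbarv k * vbar k ^ 2 - μlowv k * vlow k ^ 2 : ℝ) : ℂ) := by
    intro k
    have h1 := hcsbar k
    have h2 := hcslow k
    push_cast
    have h1' : (μbarv k : ℂ) * ((Complex.normSq (V k) : ℂ) - (vbar k : ℂ) ^ 2) = 0 := by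
      exact_mod_cast congrArg (Complex.ofReal) h1
    have h2' : (μlowv k : ℂ) * ((Complex.normSq (V k) : ℂ) - (vlow k : ℂ) ^ 2) = 0 := by
      exact_mod_cast congrArg (Complex.ofReal) h2
    linear_combination h1' - h2'
  have key : ((∑ k, Λp k * (pD k - pG k) + ∑ k, Λq k * (qD k - qG k) : ℝ) : ℂ)
      = ((∑ l, μ l * f l + ∑ k, μbarv k * vbar k ^ 2
          - ∑ k, μlowv k * vlow k ^ 2 : ℝ) : ℂ) := by
    simp only [hΦv, hΨv, hsb, hμf, hbar] at h0
    push_cast at h0 ⊢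
    simp only [mul_neg, Finset.sum_neg_distrib, Finset.sum_sub_distrib] at h0
    linear_combination h0
  exact_mod_cast key
end
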